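/- Let N ≥ 2 and let X_1, …, X_N be pairwise distinct real samples with order statistics X_(1) < X_(2) < … < X_(N). For any index 1 ≤ r ≤ N − 1 and any x with X_(r) < x < X_(r+1), the small-bandwidth limit of the KD-integral transform is lim_{h→0⁺} F̂^KDI_N(x; h) = (2r − 1)/(2(N − 1)). -/

import Mathlib

open MeasureTheory Filter

/-- The Gaussian kernel `K(z) = exp(-z²/2)/√(2π)`. -/
noncomputable def gaussKernel (z : ℝ) : ℝ := Real.exp (-z ^ 2 / 2) / Real.sqrt (2 * Real.pi)

noncomputable def Phi (y : ℝ) : ℝ := ∫ t in Set.Iic y, gaussKernel t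

lemma gaussKernel_eq : gaussKernel = fun z => (Real.sqrt (2 * Real.pi))⁻¹ * Real.exp (-(1/2) * z ^ 2) := by
  funext z; rw [gaussKernel]; ring_nf

lemma integrable_gaussKernel : Integrable gaussKernel := by
  rw [gaussKernel_eq]
  exact (integrable_exp_neg_mul_sq (by norm_num : (0:ℝ) < 1/2)).const_mul _

lemma integral_gaussKernel : ∫ z, gaussKernel z = 1 := by
  rw [gaussKernel_eq]
  rw [MeasureTheory.integral_const_mul, integral_gaussian]
  have h2 : Real.pi / (1/2) = 2 * Real.pi := by ring
  rw [h2, inv_mul_cancel₀]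
  positivity

lemma continuous_gaussKernel : Continuous gaussKernel := by
  rw [gaussKernel_eq]
  fun_prop

lemma Phi_tendsto_atTop : Tendsto Phi atTop (nhds 1) := by
  rw [← integral_gaussKernel]
  exact (MeasureTheory.aecover_Iic tendsto_id).integral_tendsto_of_countably_generated
    integrable_gaussKernel

lemma Phi_tendsto_atBot : Tendsto Phi atBot (nhds 0) := by
  have h : Tendsto (fun y => ∫ t in Set.Ioi y, gaussKernel t) atBot (nhds (∫ z, gaussKernel z)) :=
    (MeasureTheory.aecover_Ioi tendsto_id).integral_tendsto_of_countably_generated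
      integrable_gaussKernel
  have heq : ∀ y : ℝ, Phi y = (∫ z, gaussKernel z) - ∫ t in Set.Ioi y, gaussKernel t := by
    intro y
    have := MeasureTheory.integral_add_compl (measurableSet_Iic (a := y)) integrable_gaussKernel
    rw [Set.compl_Iic] at this
    rw [Phi, ← this]; ring
  rw [show (0:ℝ) = (∫ z, gaussKernel z) - (∫ z, gaussKernel z) by ring]
  exact (tendsto_const_nhds.sub h).congr fun y => (heq y).symm

lemma Phi_zero : Phi 0 = 1/2 := by
  have hsym : Phi 0 = ∫ t in Set.Ioi (0:ℝ), gaussKernel t := by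
    rw [Phi, ← neg_zero, ← integral_comp_neg_Iic]
    rw [neg_zero]
    congr 1; funext t; rw [gaussKernel, gaussKernel]; ring_nf
  have hsplit := MeasureTheory.integral_add_compl (measurableSet_Iic (a := (0:ℝ)))
    integrable_gaussKernel
  rw [Set.compl_Iic, integral_gaussKernel] at hsplit
  rw [← hsym] at hsplit
  have : Phi 0 + Phi 0 = 1 := hsplit
  linarith

set_option maxHeartbeats 1000000 in
lemma intervalIntegral_gaussKernel (p q : ℝ) :
    ∫ u in p..q, gaussKernel u = Phi q - Phi p := by
  rw [← intervalIntegral.integral_Iic_sub_Iic (μ := volume)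
    integrable_gaussKernel.integrableOn integrable_gaussKernel.integrableOn]
  rfl

lemma tendsto_Phi_scaled (c e : ℝ) :
    Tendsto (fun h : ℝ => Phi ((e - c) / h)) (nhdsWithin 0 (Set.Ioi 0))
      (nhds (if c < e then 1 else if e < c then 0 else 1/2)) := by
  rcases lt_trichotomy c e with hce | hce | hce
  · rw [if_pos hce]
    refine (Phi_tendsto_atTop.comp
      (tendsto_inv_nhdsGT_zero.const_mul_atTop (sub_pos.mpr hce))).congr fun h => ?_
    simp [Function.comp, div_eq_mul_inv]
  · subst hce
    rw [if_neg (lt_irrefl _), if_neg (lt_irrefl _)]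
    have : (fun h : ℝ => Phi ((c - c) / h)) = fun _ => (1:ℝ)/2 := by
      funext h; rw [sub_self, zero_div, Phi_zero]
    rw [this]; exact tendsto_const_nhds
  · rw [if_neg (not_lt.mpr hce.le), if_pos hce]
    refine (Phi_tendsto_atBot.comp
      (tendsto_inv_nhdsGT_zero.const_mul_atTop_of_neg (sub_neg.mpr hce))).congr fun h => ?_
    simp [Function.comp, div_eq_mul_inv]

/-- The Gaussian kernel density estimator with bandwidth `h` for samples `X`. -/
noncomputable def kde (N : ℕ) (X : Fin N → ℝ) (h x : ℝ) : ℝ :=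
  (1 / (N * h)) * ∑ n, gaussKernel ((x - X n) / h)

/-- `P_h(a,b) = ∫_a^b f̂_h(t) dt`. -/
noncomputable def kdeMass (N : ℕ) (X : Fin N → ℝ) (h a b : ℝ) : ℝ :=
  ∫ t in a..b, kde N X h t

lemma kdeMass_eq (N : ℕ) (X : Fin N → ℝ) {h : ℝ} (hh : 0 < h) (a b : ℝ) :
    kdeMass N X h a b = (1 / N) * ∑ n, (Phi ((b - X n) / h) - Phi ((a - X n) / h)) := by
  unfold kdeMass kde
  rw [intervalIntegral.integral_const_mul]
  rw [intervalIntegral.integral_finset_sum (fun n _ =>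
    ((show Continuous fun t : ℝ => gaussKernel ((t - X n) / h) from
      continuous_gaussKernel.comp (by fun_prop)).intervalIntegrable a b))]
  have hterm : ∀ n : Fin N,
      (∫ t in a..b, gaussKernel ((t - X n) / h)) =
        h * (Phi ((b - X n) / h) - Phi ((a - X n) / h)) := by
    intro n
    have h1 : (fun t : ℝ => gaussKernel ((t - X n) / h)) =
        fun t : ℝ => gaussKernel (t / h - X n / h) := by
      funext t; rw [sub_div]
    calc (∫ t in a..b, gaussKernel ((t - X n) / h))
        = ∫ t in a..b, gaussKernel (t / h - X n / h) := by rw [h1]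
      _ = h • ∫ u in a / h - X n / h..b / h - X n / h, gaussKernel u :=
          intervalIntegral.integral_comp_div_sub gaussKernel hh.ne' _
      _ = h * (Phi ((b - X n) / h) - Phi ((a - X n) / h)) := by
          rw [smul_eq_mul, intervalIntegral_gaussKernel, sub_div, sub_div]
  simp only [hterm]
  rw [← Finset.mul_sum, ← mul_assoc]
  congr 1
  by_cases hN : (N : ℝ) = 0
  · simp [hN]
  · field_simp

lemma sum_ind_lt (N r : ℕ) (hr : r ≤ N) :
    ∑ n : Fin N, (if (n : ℕ) < r then (1:ℝ) else 0) = r := by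
  rw [Fin.sum_univ_eq_sum_range fun i => if i < r then (1:ℝ) else 0]
  have hf : (Finset.range N).filter (· < r) = Finset.range r := by
    ext i; simp; omega
  rw [Finset.sum_ite, Finset.sum_const, Finset.sum_const_zero, add_zero, hf,
    Finset.card_range, nsmul_eq_mul, mul_one]

lemma sum_ind_eq (N k : ℕ) (hk : k < N) (c : ℝ) :
    ∑ n : Fin N, (if (n : ℕ) = k then c else 0) = c := by
  rw [Fin.sum_univ_eq_sum_range fun i => if i = k then c else 0,
    Finset.sum_ite_eq' (Finset.range N) k fun _ => c, if_pos (Finset.mem_range.mpr hk)]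

/-- The kernel density integral transform, where `a` is the sample minimum and `b`
the sample maximum. -/
noncomputable def kdi (N : ℕ) (X : Fin N → ℝ) (a b h x : ℝ) : ℝ :=
  if x < a then 0
  else if x < b then kdeMass N X h a x / kdeMass N X h a b
  else 1

/-- Min-max scaling, where `a` is the sample minimum and `b` the sample maximum. -/
noncomputable def minmax (a b x : ℝ) : ℝ :=
  if x ≤ a then 0
  else if x ≤ b then (x - a) / (b - a)
  else 1

/-- For pairwise distinct samples `X_(1) < … < X_(N)` (here `X` is strictly monotone,
so `X ⟨i⟩` is the `(i+1)`-th order statistic), for `1 ≤ r ≤ N - 1` and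
`X_(r) < x < X_(r+1)`, the small-bandwidth limit of the KD-integral transform is
`(2r - 1)/(2(N - 1))`. -/
theorem kdi_tendsto_of_between_order_stats (N : ℕ) (hN : 2 ≤ N) (X : Fin N → ℝ)
    (hX : StrictMono X) (r : ℕ) (hr1 : 1 ≤ r) (hr2 : r ≤ N - 1) (x : ℝ)
    (hx1 : X ⟨r - 1, by omega⟩ < x) (hx2 : x < X ⟨r, by omega⟩) :
    Tendsto (fun h => kdi N X (X ⟨0, by omega⟩) (X ⟨N - 1, by omega⟩) h x)
      (nhdsWithin 0 (Set.Ioi 0))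
      (nhds ((2 * (r : ℝ) - 1) / (2 * ((N : ℝ) - 1)))) := by
  have hN0 : 0 < N := by omega
  set a : ℝ := X ⟨0, by omega⟩ with ha_def
  set b : ℝ := X ⟨N - 1, by omega⟩ with hb_def
  -- order facts
  have hlt : ∀ n : Fin N, (n : ℕ) < r → X n < x := fun n hn =>
    lt_of_le_of_lt (hX.monotone (show n ≤ ⟨r - 1, by omega⟩ by
      rw [Fin.le_def]; simp; omega)) hx1
  have hgt : ∀ n : Fin N, r ≤ (n : ℕ) → x < X n := fun n hn =>
    lt_of_lt_of_le hx2 (hX.monotone (show (⟨r, by omega⟩ : Fin N) ≤ n by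
      rw [Fin.le_def]; simpa using hn))
  have h0 : ∀ n : Fin N, 0 < (n : ℕ) → a < X n := fun n hn =>
    hX (show (⟨0, by omega⟩ : Fin N) < n by rw [Fin.lt_def]; simpa using hn)
  have hb' : ∀ n : Fin N, (n : ℕ) < N - 1 → X n < b := fun n hn =>
    hX (show n < (⟨N - 1, by omega⟩ : Fin N) by rw [Fin.lt_def]; simpa using hn)
  have hXn_eq : ∀ n : Fin N, (n : ℕ) = 0 → X n = a := by
    intro n hn; rw [ha_def]; congr 1; exact Fin.ext hn
  have hXn_eqb : ∀ n : Fin N, (n : ℕ) = N - 1 → X n = b := by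
    intro n hn; rw [hb_def]; congr 1; exact Fin.ext hn
  have hax : a < x := hlt _ (by simp; omega)
  have hxb : x < b := hgt ⟨N - 1, by omega⟩ (by simpa using hr2)
  -- generic limit for kdeMass
  have main : ∀ (e : ℝ),
      Tendsto (fun h => kdeMass N X h a e) (nhdsWithin 0 (Set.Ioi 0))
        (nhds ((1 / N : ℝ) * ∑ n : Fin N,
          ((if X n < e then (1:ℝ) else if e < X n then 0 else 1/2) -
           (if X n < a then (1:ℝ) else if a < X n then 0 else 1/2)))) := by
    intro e
    have hev : ∀ᶠ h in nhdsWithin (0:ℝ) (Set.Ioi 0),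
        (1 / N : ℝ) * (∑ n : Fin N, (Phi ((e - X n) / h) - Phi ((a - X n) / h))) =
          kdeMass N X h a e :=
      eventually_mem_nhdsWithin.mono fun h hh => (kdeMass_eq N X hh a e).symm
    refine Tendsto.congr' hev ?_
    exact (tendsto_finset_sum _ fun n _ =>
      (tendsto_Phi_scaled (X n) e).sub (tendsto_Phi_scaled (X n) a)).const_mul _
  -- numerator
  have hnum := main x
  have hnum_val : ∑ n : Fin N,
      ((if X n < x then (1:ℝ) else if x < X n then 0 else 1/2) -
       (if X n < a then (1:ℝ) else if a < X n then 0 else 1/2)) =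
      (r : ℝ) - 1/2 := by
    have hcong : ∀ n : Fin N,
        ((if X n < x then (1:ℝ) else if x < X n then 0 else 1/2) -
         (if X n < a then (1:ℝ) else if a < X n then 0 else 1/2)) =
        (if (n : ℕ) < r then (1:ℝ) else 0) - (if (n : ℕ) = 0 then (1:ℝ)/2 else 0) := by
      intro n
      by_cases hn0 : (n : ℕ) = 0
      · have hxa := hXn_eq n hn0
        rw [if_pos (by rw [hxa]; exact hax), if_neg (by rw [hxa]; exact lt_irrefl a),
          if_neg (by rw [hxa]; exact lt_irrefl a), if_pos (by omega), if_pos hn0]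
      · have han := h0 n (by omega)
        rw [if_neg (not_lt.mpr han.le), if_pos han, if_neg hn0]
        by_cases hnr : (n : ℕ) < r
        · rw [if_pos (hlt n hnr), if_pos hnr]
        · rw [if_neg (not_lt.mpr (hgt n (by omega)).le), if_pos (hgt n (by omega)),
            if_neg hnr]
    rw [Finset.sum_congr rfl fun n _ => hcong n, Finset.sum_sub_distrib,
      sum_ind_lt N r (by omega), sum_ind_eq N 0 (by omega)]
  -- denominator
  have hden := main b
  have hden_val : ∑ n : Fin N,
      ((if X n < b then (1:ℝ) else if b < X n then 0 else 1/2) -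
       (if X n < a then (1:ℝ) else if a < X n then 0 else 1/2)) =
      (N : ℝ) - 1 := by
    have hcong : ∀ n : Fin N,
        ((if X n < b then (1:ℝ) else if b < X n then 0 else 1/2) -
         (if X n < a then (1:ℝ) else if a < X n then 0 else 1/2)) =
        ((1:ℝ) - (if (n : ℕ) = N - 1 then (1:ℝ)/2 else 0)) -
          (if (n : ℕ) = 0 then (1:ℝ)/2 else 0) := by
      intro n
      have hpart2 : (if X n < a then (1:ℝ) else if a < X n then 0 else 1/2) =
          (if (n : ℕ) = 0 then (1:ℝ)/2 else 0) := by
        by_cases hn0 : (n : ℕ) = 0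
        · have hxa := hXn_eq n hn0
          rw [if_neg (by rw [hxa]; exact lt_irrefl a),
            if_neg (by rw [hxa]; exact lt_irrefl a), if_pos hn0]
        · have han := h0 n (by omega)
          rw [if_neg (not_lt.mpr han.le), if_pos han, if_neg hn0]
      rw [hpart2]
      congr 1
      by_cases hnN : (n : ℕ) = N - 1
      · have hxb' := hXn_eqb n hnN
        rw [if_neg (by rw [hxb']; exact lt_irrefl b),
          if_neg (by rw [hxb']; exact lt_irrefl b), if_pos hnN]
        norm_num
      · have hlt' := hb' n (by omega)
        rw [if_pos hlt', if_neg hnN]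
        norm_num
    rw [Finset.sum_congr rfl fun n _ => hcong n, Finset.sum_sub_distrib,
      Finset.sum_sub_distrib, Finset.sum_const, Finset.card_univ, Fintype.card_fin,
      sum_ind_eq N (N - 1) (by omega), sum_ind_eq N 0 (by omega), nsmul_eq_mul, mul_one]
    ring
  rw [hnum_val] at hnum
  rw [hden_val] at hden
  have hN2 : (2 : ℝ) ≤ (N : ℝ) := by exact_mod_cast hN
  have hden_ne : (1 / N : ℝ) * ((N : ℝ) - 1) ≠ 0 :=
    ne_of_gt (mul_pos (by positivity) (by linarith))
  have hratio := hnum.div hden hden_ne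
  have hfun : (fun h => kdi N X a b h x) =
      fun h => kdeMass N X h a x / kdeMass N X h a b := by
    funext h
    rw [kdi, if_neg (not_lt.mpr hax.le), if_pos hxb]
  rw [hfun]
  have hval : (1 / N : ℝ) * ((r : ℝ) - 1/2) / ((1 / N : ℝ) * ((N : ℝ) - 1)) =
      (2 * (r : ℝ) - 1) / (2 * ((N : ℝ) - 1)) := by
    have hNne : (N : ℝ) ≠ 0 := by linarith
    have hN1 : (N : ℝ) - 1 ≠ 0 := by linarith
    field_simp
  rw [← hval]
  exact hratio
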